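/- Let C be a Cayley algebra over a field F of characteristic 2 with norm n, a ∈ C with n(a,1) = 1, and W = (F·1 + F·a)^⊥. An isometry φ ∈ O(C₀,n), written φ(w) = n(w_σ, w)·1 + σ(w) on W with σ ∈ Sp(W) and w_σ ∈ W, extends to an element of O(C,n) fixing 1 if and only if n(w_σ) ∈ {μ + μ² : μ ∈ F}. In particular, the restriction homomorphism Φ : {φ ∈ O(C,n) : φ(1)=1} → O(C₀,n) is surjective when F is algebraically closed. -/

import Mathlib

open QuadraticMap

/-- Characteristic 2: an isometry `φ` of `C₀`, written on `W` as
`φ(w) = n(w_σ,w)·1 + σ(w)` with `σ ∈ Sp(W)` and `w_σ ∈ W`, extends to an element of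
`O(C,n)` fixing `1` iff `n(w_σ) ∈ {μ + μ² : μ ∈ F}`. In particular the restriction map
`Φ : {φ ∈ O(C,n) : φ(1)=1} → O(C₀,n)` is surjective when `F` is algebraically closed. -/
theorem cayley_char_two_extension_criterion {F : Type*} [Field F] {C : Type*}
    [NonAssocRing C] [Module F C] [SMulCommClass F C C] [IsScalarTower F C C]
    (n : QuadraticForm F C)
    (hdim : Module.finrank F C = 8)
    (hcomp : ∀ x y : C, n (x * y) = n x * n y)
    (hnd : ∀ x : C, (∀ y : C, polar (⇑n) x y = 0) → x = 0)
    (halt : ∀ x y : C, x * (x * y) = (x * x) * y ∧ (x * y) * y = x * (y * y))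
    (hchar : (2 : F) = 0)
    (a : C) (ha : polar (⇑n) a 1 = 1)
    (C₀ : Submodule F C) (hC₀ : ∀ x : C, x ∈ C₀ ↔ polar (⇑n) x 1 = 0)
    (W : Submodule F C)
    (hW : ∀ x : C, x ∈ W ↔ (polar (⇑n) x 1 = 0 ∧ polar (⇑n) x a = 0))
    (hWC₀ : W ≤ C₀) (h1 : (1 : C) ∈ C₀)
    (φ : ↥C₀ ≃ₗ[F] ↥C₀) (hφn : ∀ x : ↥C₀, n ((φ x : C)) = n ((x : C)))
    (σ : ↥W ≃ₗ[F] ↥W)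
    (hσ : ∀ w w' : ↥W, polar (⇑n) ((σ w : C)) ((σ w' : C)) = polar (⇑n) (w : C) (w' : C))
    (wσ : ↥W)
    (hdecomp : ∀ w : ↥W,
      ((φ ⟨(w : C), hWC₀ w.2⟩ : C)) = polar (⇑n) (wσ : C) (w : C) • (1 : C) + (σ w : C))
    (hwσ : ∀ w : ↥W, n ((w : C)) - n ((σ w : C)) = (polar (⇑n) (wσ : C) (w : C)) ^ 2) :
    ((∃ Φ : C ≃ₗ[F] C, (∀ x : C, n (Φ x) = n x) ∧ Φ 1 = 1 ∧
        ∀ x : ↥C₀, Φ (x : C) = ((φ x : C))) ↔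
      (∃ μ : F, n ((wσ : C)) = μ + μ ^ 2)) ∧
    (IsAlgClosed F → ∃ Φ : C ≃ₗ[F] C, (∀ x : C, n (Φ x) = n x) ∧ Φ 1 = 1 ∧
        ∀ x : ↥C₀, Φ (x : C) = ((φ x : C))) := by
  -- basic characteristic-2 arithmetic
  have h2 : ∀ r : F, r + r = 0 := fun r => by rw [← two_mul, hchar, zero_mul]
  have hneg : ∀ r : F, -r = r := fun r => neg_eq_of_add_eq_zero_left (h2 r)
  -- polar form basics
  have hPself : ∀ x : C, polar (⇑n) x x = 0 := by
    intro x; rw [polar_self, two_smul]; exact h2 _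
  have hexp : ∀ x y : C, n (x + y) = n x + n y + polar (⇑n) x y := by
    intro x y; simp only [polar]; ring
  have hsm : ∀ (t : F) (x : C), n (t • x) = t ^ 2 * n x := by
    intro t x; rw [QuadraticMap.map_smul, smul_eq_mul]; ring
  -- n 1 = 1
  have hn1 : n 1 = 1 := by
    have e : n 1 = n 1 * n 1 := by simpa using hcomp 1 1
    rcases eq_or_ne (n 1) 0 with h0 | h0
    · exfalso
      have hz : ∀ x : C, n x = 0 := by
        intro x
        have := hcomp x 1
        rw [mul_one, h0, mul_zero] at this
        exact this
      have : polar (⇑n) a 1 = 0 := by simp [polar, hz]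
      rw [this] at ha
      exact zero_ne_one ha
    · exact (mul_left_cancel₀ h0 (by rw [← e, mul_one])).symm
  -- membership lemmas
  have hP1 : ∀ x : C, x ∈ C₀ → polar (⇑n) x 1 = 0 := fun x hx => (hC₀ x).1 hx
  have hP1' : ∀ x : C, x ∈ C₀ → polar (⇑n) (1 : C) x = 0 := fun x hx => by
    rw [polar_comm]; exact hP1 x hx
  have hPa1 : polar (⇑n) (1 : C) a = 1 := by rw [polar_comm]; exact ha
  have hWmem : ∀ x : C, x ∈ W → polar (⇑n) x 1 = 0 ∧ polar (⇑n) x a = 0 :=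
    fun x hx => (hW x).1 hx
  have hmemC₀ : ∀ x : C, x - polar (⇑n) x 1 • a ∈ C₀ := by
    intro x
    rw [hC₀, polar_sub_left, polar_smul_left, smul_eq_mul, ha, mul_one, sub_self]
  have hmemW : ∀ c : C, c ∈ C₀ → c - polar (⇑n) c a • (1 : C) ∈ W := by
    intro c hc
    rw [hW]
    constructor
    · rw [polar_sub_left, polar_smul_left, smul_eq_mul, hPself, mul_zero, sub_zero,
        hP1 c hc]
    · rw [polar_sub_left, polar_smul_left, smul_eq_mul, hPa1, mul_one, sub_self]
  -- nondegeneracy consequences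
  have hzeroC : ∀ z : C, (∀ c : C, c ∈ C₀ → polar (⇑n) z c = 0) →
      polar (⇑n) z a = 0 → z = 0 := by
    intro z hc hza
    apply hnd
    intro y
    have hy := hc _ (hmemC₀ y)
    rw [polar_sub_right, polar_smul_right, smul_eq_mul, hza, mul_zero, sub_zero] at hy
    exact hy
  have hzeroW : ∀ z : C, z ∈ W → (∀ w : ↥W, polar (⇑n) z (w : C) = 0) → z = 0 := by
    intro z hz hw
    apply hzeroC
    · intro c hc
      have hmem := hmemW c hc
      have := hw ⟨c - polar (⇑n) c a • (1 : C), hmem⟩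
      simp only [Submodule.coe_mk] at this
      rw [polar_sub_right, polar_smul_right, smul_eq_mul] at this
      have hz1 : polar (⇑n) z (1 : C) = 0 := (hWmem z hz).1
      rw [hz1, mul_zero, sub_zero] at this
      exact this
    · exact (hWmem z hz).2
  -- φ preserves the polar form
  have hφP : ∀ x y : ↥C₀, polar (⇑n) ((φ x : C)) ((φ y : C)) = polar (⇑n) (x : C) (y : C) := by
    intro x y
    have hadd : ((φ x : C)) + ((φ y : C)) = ((φ (x + y) : C)) := by
      rw [map_add]; rfl
    simp only [polar]
    rw [hadd, hφn, hφn, hφn]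
    rfl
  -- φ fixes 1
  have hφ1 : ((φ ⟨1, h1⟩ : C)) = 1 := by
    set z : C := (φ ⟨1, h1⟩ : C) with hzdef
    have hz0 : ∀ c : C, c ∈ C₀ → polar (⇑n) z c = 0 := by
      intro c hc
      have : c = ((φ (φ.symm ⟨c, hc⟩) : C)) := by rw [LinearEquiv.apply_symm_apply]
      rw [this, hzdef, hφP]
      exact hP1' _ (φ.symm ⟨c, hc⟩).2
    set s : F := polar (⇑n) z a with hsdef
    have hz' : z - s • (1 : C) = 0 := by
      apply hzeroC
      · intro c hc
        rw [polar_sub_left, polar_smul_left, smul_eq_mul, hz0 c hc, hP1' c hc,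
          mul_zero, sub_zero]
      · rw [polar_sub_left, polar_smul_left, smul_eq_mul, hPa1, mul_one, ← hsdef,
          sub_self]
    have hzs : z = s • (1 : C) := by
      have := sub_eq_zero.mp hz'
      exact this
    have hns : s ^ 2 = 1 := by
      have h1' : n z = 1 := by rw [hzdef, hφn]; simpa using hn1
      rw [hzs, hsm, hn1, mul_one] at h1'
      exact h1'
    have hs1 : s = 1 := by
      have hsq : (s + 1) ^ 2 = 0 := by linear_combination hns + (s + 1) * hchar
      have hs0 : s + 1 = 0 := pow_eq_zero_iff (two_ne_zero) |>.mp hsq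
      have : s = -1 := eq_neg_of_add_eq_zero_left hs0
      rw [this, hneg]
    rw [hzs, hs1, one_smul]
  -- key construction: given μ with n wσ = μ + μ², build the extension Φ
  have key : ∀ μ : F, n ((wσ : C)) = μ + μ ^ 2 →
      ∃ Φ : C ≃ₗ[F] C, (∀ x : C, n (Φ x) = n x) ∧ Φ 1 = 1 ∧
        ∀ x : ↥C₀, Φ (x : C) = ((φ x : C)) := by
    intro μ hμ
    set u : C := ((σ wσ : C)) with hudef
    have hu : u ∈ W := (σ wσ).2
    set b : C := μ • (1 : C) + a + u with hbdef
    have hPb1 : polar (⇑n) b 1 = 1 := by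
      rw [hbdef, polar_add_left, polar_add_left, polar_smul_left, smul_eq_mul,
        hPself, mul_zero, ha, (hWmem u hu).1]
      ring
    have hP1b : polar (⇑n) (1 : C) b = 1 := by rw [polar_comm]; exact hPb1
    have hnu : n u = n ((wσ : C)) := by
      have := hwσ wσ
      rw [hPself, ← hudef] at this
      have h0 : n ((wσ : C)) - n u = 0 := by simpa using this
      exact (sub_eq_zero.mp h0).symm
    have hnb : n b = n a := by
      have e1 : n (μ • (1 : C) + a) = μ ^ 2 + n a + μ := by
        rw [hexp, hsm, hn1, polar_smul_left, smul_eq_mul, hPa1]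
        ring
      rw [hbdef, hexp, e1, hnu, polar_add_left, polar_smul_left, smul_eq_mul]
      rw [polar_comm (⇑n) (1:C) u, (hWmem u hu).1, polar_comm (⇑n) a u, (hWmem u hu).2]
      linear_combination hμ + (μ ^ 2 + μ) * hchar
    -- the key polar identity
    have hkey : ∀ c : ↥C₀, polar (⇑n) ((φ c : C)) b = polar (⇑n) (c : C) a := by
      intro c
      set s : F := polar (⇑n) (c : C) a with hsdef
      have hwmem : ((c : C)) - s • (1 : C) ∈ W := hmemW _ c.2
      set w : ↥W := ⟨(c : C) - s • (1 : C), hwmem⟩ with hwdef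
      have hceq : c = s • (⟨1, h1⟩ : ↥C₀) + ⟨(w : C), hWC₀ w.2⟩ := by
        apply Subtype.ext
        push_cast [hwdef]
        module
      have hφc : ((φ c : C)) = s • (1 : C) +
          (polar (⇑n) ((wσ : C)) ((w : C)) • (1 : C) + ((σ w : C))) := by
        rw [hceq, map_add, _root_.map_smul]
        push_cast
        rw [hφ1, hdecomp w]
      set p : F := polar (⇑n) ((wσ : C)) ((w : C)) with hpdef
      have hσwb : polar (⇑n) ((σ w : C)) b = p := by
        rw [hbdef, polar_add_right, polar_add_right, polar_smul_right, smul_eq_mul]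
        rw [(hWmem _ (σ w).2).1, (hWmem _ (σ w).2).2, hudef, hσ w wσ,
          polar_comm (⇑n) ((w : C)) ((wσ : C)), ← hpdef]
        ring
      rw [hφc, polar_add_left, polar_add_left, polar_smul_left, polar_smul_left,
        smul_eq_mul, smul_eq_mul, hP1b, hσwb]
      have : s * 1 + (p * 1 + p) = s + (p + p) := by ring
      rw [this, h2 p, add_zero, hsdef]
    -- the linear maps
    set L : C →ₗ[F] F :=
      { toFun := fun x => polar (⇑n) x 1
        map_add' := fun x y => polar_add_left (Q := n) x y 1
        map_smul' := fun t x => by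
          simp only [RingHom.id_apply, smul_eq_mul]
          rw [polar_smul_left (Q := n) t x 1, smul_eq_mul] } with hLdef
    have hL : ∀ x : C, L x = polar (⇑n) x 1 := fun x => rfl
    set π : C →ₗ[F] ↥C₀ :=
      LinearMap.codRestrict C₀ (LinearMap.id - L.smulRight a)
        (fun x => by simpa [hL] using hmemC₀ x) with hπdef
    have hπ : ∀ x : C, ((π x : C)) = x - polar (⇑n) x 1 • a := fun x => rfl
    set f : C →ₗ[F] C :=
      C₀.subtype ∘ₗ (φ.toLinearMap ∘ₗ π) + L.smulRight b with hfdef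
    have hf : ∀ x : C, f x = ((φ (π x) : C)) + polar (⇑n) x 1 • b := fun x => rfl
    have hπc : ∀ c : ↥C₀, π (c : C) = c := by
      intro c
      apply Subtype.ext
      rw [hπ, hP1 _ c.2, zero_smul, sub_zero]
    have hfc : ∀ c : ↥C₀, f (c : C) = ((φ c : C)) := by
      intro c
      rw [hf, hP1 _ c.2, zero_smul, add_zero, hπc]
    have hker : ∀ z : C, f z = 0 → z = 0 := by
      intro z hz
      have h0 : polar (⇑n) (f z) 1 = 0 := by rw [hz, polar_zero_left]
      rw [hf, polar_add_left, polar_smul_left, smul_eq_mul, hPb1, mul_one,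
        hP1 _ (φ (π z)).2, zero_add] at h0
      have hz' : ((φ (π z) : C)) = 0 := by
        have := hf z
        rw [hz, h0, zero_smul, add_zero] at this
        exact this.symm
      have hπz : π z = 0 := by
        apply φ.injective
        rw [map_zero]
        exact Subtype.ext hz'
      have := hπ z
      rw [hπz, h0, zero_smul, sub_zero] at this
      simpa using this.symm
    have hinj : Function.Injective f := by
      intro x y hxy
      have : f (x - y) = 0 := by rw [LinearMap.map_sub, hxy, sub_self]
      have := hker _ this
      exact sub_eq_zero.mp this
    have hsurj : Function.Surjective f := by
      intro y
      set t : F := polar (⇑n) y 1 with htdef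
      have hcy : y - t • b ∈ C₀ := by
        rw [hC₀, polar_sub_left, polar_smul_left, smul_eq_mul, hPb1, mul_one,
          ← htdef, sub_self]
      refine ⟨((φ.symm ⟨y - t • b, hcy⟩ : C)) + t • a, ?_⟩
      set c' : ↥C₀ := φ.symm ⟨y - t • b, hcy⟩ with hc'def
      have hx1 : polar (⇑n) (((c' : C)) + t • a) 1 = t := by
        rw [polar_add_left, polar_smul_left, smul_eq_mul, ha, mul_one,
          hP1 _ c'.2, zero_add]
      have hπx : π (((c' : C)) + t • a) = c' := by
        apply Subtype.ext
        rw [hπ, hx1]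
        abel
      rw [hf, hπx, hx1, hc'def, LinearEquiv.apply_symm_apply]
      show (y - t • b) + t • b = y
      abel
    refine ⟨LinearEquiv.ofBijective f ⟨hinj, hsurj⟩, ?_, ?_, ?_⟩
    · intro x
      show n (f x) = n x
      set t : F := polar (⇑n) x 1 with htdef
      have hx : x = ((π x : C)) + t • a := by rw [hπ]; abel
      have e1 : n (f x) = n ((π x : C)) + t ^ 2 * n a + t * polar (⇑n) ((π x : C)) a := by
        rw [hf, hexp, hφn, hsm, hnb, polar_smul_right, smul_eq_mul, hkey]
      have e2 : n x = n ((π x : C)) + t ^ 2 * n a + t * polar (⇑n) ((π x : C)) a := by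
        conv_lhs => rw [hx]
        rw [hexp, hsm, polar_smul_right, smul_eq_mul]
      rw [e1, e2]
    · show f 1 = 1
      have := hfc ⟨1, h1⟩
      simpa [hφ1] using this
    · intro x
      show f (x : C) = ((φ x : C))
      exact hfc x
  -- forward direction: an extension forces the criterion
  have fwd : (∃ Φ : C ≃ₗ[F] C, (∀ x : C, n (Φ x) = n x) ∧ Φ 1 = 1 ∧
      ∀ x : ↥C₀, Φ (x : C) = ((φ x : C))) → ∃ μ : F, n ((wσ : C)) = μ + μ ^ 2 := by
    rintro ⟨Φ, hΦn, hΦ1, hΦC₀⟩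
    have hΦP : ∀ x y : C, polar (⇑n) (Φ x) (Φ y) = polar (⇑n) x y := by
      intro x y
      simp only [polar]
      rw [← _root_.map_add, hΦn, hΦn, hΦn]
    set b : C := Φ a with hbdef
    have hPb1 : polar (⇑n) b (1 : C) = 1 := by
      have h := hΦP a 1
      rwa [hΦ1, ha] at h
    have hbw : ∀ w : ↥W, polar (⇑n) b ((σ w : C)) = polar (⇑n) ((wσ : C)) ((w : C)) := by
      intro w
      have h : polar (⇑n) (Φ a) (Φ ((w : C))) = polar (⇑n) a ((w : C)) := hΦP a ((w : C))
      have e : Φ ((w : C)) = ((φ ⟨(w : C), hWC₀ w.2⟩ : C)) := hΦC₀ ⟨(w : C), hWC₀ w.2⟩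
      have haw : polar (⇑n) a ((w : C)) = 0 := by
        rw [polar_comm]; exact (hWmem _ w.2).2
      rw [e, hdecomp w, haw, polar_add_right, polar_smul_right, smul_eq_mul, hPb1,
        mul_one, ← hbdef] at h
      rw [eq_neg_of_add_eq_zero_right h, hneg]
    set lam : F := polar (⇑n) b a with hlamdef
    have huW : b - a - lam • (1 : C) ∈ W := by
      rw [hW]
      constructor
      · rw [polar_sub_left, polar_sub_left, polar_smul_left, smul_eq_mul, hPself,
          mul_zero, hPb1, ha, sub_self, sub_zero]
      · rw [polar_sub_left, polar_sub_left, polar_smul_left, smul_eq_mul, hPa1,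
          mul_one, hPself a, sub_zero, ← hlamdef, sub_self]
    set u : C := b - a - lam • (1 : C) with hudef
    have hkey0 : ∀ w' : ↥W, polar (⇑n) (u - ((σ wσ : C))) ((w' : C)) = 0 := by
      intro w'
      have hw' : ((σ (σ.symm w') : C)) = ((w' : C)) := by
        rw [LinearEquiv.apply_symm_apply]
      have e1 : polar (⇑n) b ((w' : C)) = polar (⇑n) ((wσ : C)) ((σ.symm w' : C)) := by
        rw [← hw']; exact hbw (σ.symm w')
      have e2 : polar (⇑n) ((σ wσ : C)) ((w' : C)) =
          polar (⇑n) ((wσ : C)) ((σ.symm w' : C)) := by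
        rw [← hw', hσ]
      have e3 : polar (⇑n) a ((w' : C)) = 0 := by
        rw [polar_comm]; exact (hWmem _ w'.2).2
      have e4 : polar (⇑n) (1 : C) ((w' : C)) = 0 := by
        rw [polar_comm]; exact (hWmem _ w'.2).1
      rw [polar_sub_left, hudef, polar_sub_left, polar_sub_left, polar_smul_left,
        smul_eq_mul, e1, e2, e3, e4]
      ring
    have huσ : u = ((σ wσ : C)) := by
      have hmem : u - ((σ wσ : C)) ∈ W := W.sub_mem huW (σ wσ).2
      exact sub_eq_zero.mp (hzeroW _ hmem hkey0)
    have hbeq : b = lam • (1 : C) + a + ((σ wσ : C)) := by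
      rw [← huσ, hudef]; abel
    have hnσwσ : n ((σ wσ : C)) = n ((wσ : C)) := by
      have h := hwσ wσ
      rw [hPself] at h
      have h0 : n ((wσ : C)) - n ((σ wσ : C)) = 0 := by simpa using h
      exact (sub_eq_zero.mp h0).symm
    have hnb : n b = lam ^ 2 + lam + n a + n ((wσ : C)) := by
      have hσWm := hWmem _ (σ wσ).2
      have e1 : n (lam • (1 : C) + a) = lam ^ 2 + n a + lam := by
        rw [hexp, hsm, hn1, polar_smul_left, smul_eq_mul, hPa1]
        ring
      rw [hbeq, hexp, e1, hnσwσ, polar_add_left, polar_smul_left, smul_eq_mul]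
      rw [polar_comm (⇑n) (1 : C) ((σ wσ : C)), hσWm.1, polar_comm (⇑n) a ((σ wσ : C)),
        hσWm.2]
      ring
    have hnba : n b = n a := hΦn a
    refine ⟨lam, ?_⟩
    have h5 : lam ^ 2 + lam + n ((wσ : C)) = 0 := by linear_combination hnba - hnb
    linear_combination h5 - (lam + lam ^ 2) * hchar
  refine ⟨⟨fwd, fun ⟨μ, hμ⟩ => key μ hμ⟩, ?_⟩
  intro hF
  obtain ⟨r, hr⟩ : ∃ r : F, r ^ 2 + r + n ((wσ : C)) = 0 := by
    have hdeg : (Polynomial.X ^ 2 + Polynomial.X + Polynomial.C (n ((wσ : C))) :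
        Polynomial F).degree = 2 := by
      compute_degree!
    obtain ⟨r, hr⟩ := IsAlgClosed.exists_root
      (Polynomial.X ^ 2 + Polynomial.X + Polynomial.C (n ((wσ : C))))
      (by rw [hdeg]; exact two_ne_zero)
    refine ⟨r, ?_⟩
    simpa [Polynomial.IsRoot] using hr
  exact key r (by linear_combination hr - (r + r ^ 2) * hchar)
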